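/- Let s ∈ (0,1) and ν ∈ (−s, 0). There exists a constant C = C(s,ν) > 0 such that for all λ > 0, all Δt > 0 and every integer j ≥ 1, with φ(t) := e^{−λt} and t_j := jΔt, one has ∫_{t_j}^{t_{j+1}} φ(η) (∫_{η}^{t_{j+1}} t^{s−1} dt) dη ≤ C · Δt^{s+ν} · ∫_{t_j}^{t_{j+1}} φ(η) η^{−ν} dη. -/

import Mathlib

open Real MeasureTheory intervalIntegral

/-- Let `s ∈ (0,1)` and `ν ∈ (−s, 0)`. There exists `C = C(s,ν) > 0` such
that for all `λ > 0`, `Δt > 0` and every integer `j ≥ 1`, with `φ(t) = e^{−λt}` and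
`t_j = jΔt`, one has
`∫_{t_j}^{t_{j+1}} φ(η) (∫_η^{t_{j+1}} t^{s−1} dt) dη ≤ C Δt^{s+ν} ∫_{t_j}^{t_{j+1}} φ(η) η^{−ν} dη`. -/
theorem stmt1 (s ν : ℝ) (hs : s ∈ Set.Ioo (0:ℝ) 1) (hν : ν ∈ Set.Ioo (-s) (0:ℝ)) :
    ∃ C : ℝ, 0 < C ∧ ∀ lam Δt : ℝ, 0 < lam → 0 < Δt → ∀ j : ℕ, 1 ≤ j →
      (∫ η in ((j:ℝ) * Δt)..(((j:ℝ) + 1) * Δt),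
          Real.exp (-lam * η) * ∫ t in η..(((j:ℝ) + 1) * Δt), t ^ (s - 1)) ≤
        C * Δt ^ (s + ν) *
          ∫ η in ((j:ℝ) * Δt)..(((j:ℝ) + 1) * Δt), Real.exp (-lam * η) * η ^ (-ν) := by
  obtain ⟨hs0, hs1⟩ := hs
  obtain ⟨hν1, hν2⟩ := hν
  refine ⟨1, one_pos, ?_⟩
  intro lam Δt hlam hΔt j hj
  set a : ℝ := (j:ℝ) * Δt with ha_def
  set b : ℝ := ((j:ℝ) + 1) * Δt with hb_def
  have hj1 : (1:ℝ) ≤ (j:ℝ) := by exact_mod_cast hj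
  have hΔa : Δt ≤ a := by
    rw [ha_def]; nlinarith
  have ha : 0 < a := lt_of_lt_of_le hΔt hΔa
  have hab : a ≤ b := by
    rw [ha_def, hb_def]; nlinarith
  have hba : b - a = Δt := by rw [ha_def, hb_def]; ring
  -- the inner integral equals an explicit formula
  have hs1' : (-1:ℝ) < s - 1 := by linarith
  have hseq : s - 1 + 1 = s := by ring
  -- continuity facts
  have hc1 : Continuous fun η : ℝ => Real.exp (-lam * η) :=
    (Real.continuous_exp.comp (continuous_const.mul continuous_id))
  have hcs : Continuous fun η : ℝ => η ^ s := by
    rw [continuous_iff_continuousAt]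
    exact fun x => Real.continuousAt_rpow_const x s (Or.inr hs0.le)
  have hcν : Continuous fun η : ℝ => η ^ (-ν) := by
    rw [continuous_iff_continuousAt]
    exact fun x => Real.continuousAt_rpow_const x (-ν) (Or.inr (by linarith))
  -- LHS integrand equals a continuous function
  have hfeq : (fun η : ℝ => Real.exp (-lam * η) * ∫ t in η..b, t ^ (s - 1))
      = fun η : ℝ => Real.exp (-lam * η) * ((b ^ s - η ^ s) / s) := by
    funext η
    rw [integral_rpow (Or.inl hs1'), hseq]
  have hf : IntervalIntegrable
      (fun η : ℝ => Real.exp (-lam * η) * ∫ t in η..b, t ^ (s - 1)) volume a b := by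
    rw [hfeq]
    exact (hc1.mul ((continuous_const.sub hcs).div_const s)).intervalIntegrable a b
  have hg : IntervalIntegrable
      (fun η : ℝ => Δt ^ (s + ν) * (Real.exp (-lam * η) * η ^ (-ν))) volume a b :=
    (continuous_const.mul (hc1.mul hcν)).intervalIntegrable a b
  have key : ∀ η ∈ Set.Icc a b,
      Real.exp (-lam * η) * ∫ t in η..b, t ^ (s - 1) ≤
        Δt ^ (s + ν) * (Real.exp (-lam * η) * η ^ (-ν)) := by
    intro η hη
    obtain ⟨hη1, hη2⟩ := hη
    have hη0 : 0 < η := lt_of_lt_of_le ha hη1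
    have hΔη : Δt ≤ η := le_trans hΔa hη1
    -- inner integral bound
    have hinner : (∫ t in η..b, t ^ (s - 1)) ≤ (b - η) * η ^ (s - 1) := by
      have h1 : (∫ t in η..b, t ^ (s - 1)) ≤ ∫ _t in η..b, η ^ (s - 1) := by
        apply integral_mono_on hη2
        · apply ContinuousOn.intervalIntegrable
          intro t ht
          rw [Set.uIcc_of_le hη2] at ht
          exact (Real.continuousAt_rpow_const t (s - 1)
            (Or.inl (ne_of_gt (lt_of_lt_of_le hη0 ht.1)))).continuousWithinAt
        · exact intervalIntegrable_const
        · intro t ht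
          exact Real.rpow_le_rpow_of_nonpos hη0 ht.1 (by linarith)
      rw [intervalIntegral.integral_const, smul_eq_mul] at h1
      exact h1
    have hexp : 0 < Real.exp (-lam * η) := Real.exp_pos _
    have hbound : (b - η) * η ^ (s - 1) ≤ Δt ^ (s + ν) * η ^ (-ν) := by
      have h2 : (b - η) * η ^ (s - 1) ≤ Δt * η ^ (s - 1) := by
        apply mul_le_mul_of_nonneg_right _ (Real.rpow_nonneg hη0.le _)
        linarith
      refine h2.trans ?_
      have h3 : Δt = Δt ^ (s + ν) * Δt ^ (1 - s - ν) := by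
        rw [← Real.rpow_add hΔt, show s + ν + (1 - s - ν) = 1 by ring, Real.rpow_one]
      calc Δt * η ^ (s - 1) = Δt ^ (s + ν) * (Δt ^ (1 - s - ν) * η ^ (s - 1)) := by
            rw [← mul_assoc, ← h3]
        _ ≤ Δt ^ (s + ν) * η ^ (-ν) := by
            apply mul_le_mul_of_nonneg_left _ (Real.rpow_nonneg hΔt.le _)
            have h4 : Δt ^ (1 - s - ν) ≤ η ^ (1 - s - ν) :=
              Real.rpow_le_rpow hΔt.le hΔη (by linarith)
            calc Δt ^ (1 - s - ν) * η ^ (s - 1) ≤ η ^ (1 - s - ν) * η ^ (s - 1) :=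
                  mul_le_mul_of_nonneg_right h4 (Real.rpow_nonneg hη0.le _)
              _ = η ^ (-ν) := by
                  rw [← Real.rpow_add hη0]; congr 1; ring
    calc Real.exp (-lam * η) * ∫ t in η..b, t ^ (s - 1)
        ≤ Real.exp (-lam * η) * ((b - η) * η ^ (s - 1)) :=
          mul_le_mul_of_nonneg_left hinner hexp.le
      _ ≤ Real.exp (-lam * η) * (Δt ^ (s + ν) * η ^ (-ν)) :=
          mul_le_mul_of_nonneg_left hbound hexp.le
      _ = Δt ^ (s + ν) * (Real.exp (-lam * η) * η ^ (-ν)) := by ring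
  calc (∫ η in a..b, Real.exp (-lam * η) * ∫ t in η..b, t ^ (s - 1))
      ≤ ∫ η in a..b, Δt ^ (s + ν) * (Real.exp (-lam * η) * η ^ (-ν)) :=
        integral_mono_on hab hf hg key
    _ = 1 * Δt ^ (s + ν) * ∫ η in a..b, Real.exp (-lam * η) * η ^ (-ν) := by
        rw [intervalIntegral.integral_const_mul]; ring
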